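/- Suppose every eigenvalue μ of C possessing an eigenvector orthogonal to the all-ones vector satisfies |μ| ≤ d − β, where 0 < β ≤ d − 1 − √(d−1). Let a ∈ ℂ^n with Σ_{v=1}^n a_v = 0 and set f = Σ_{v=1}^n a_v e_v ∈ ℂ^{2B}. Then for every integer t ≥ 1, ‖M^t f‖_{ℂ^{2B}} ≤ 2 ‖f‖_{ℂ^{2B}} · t · ( (d−1−β)/(d−1) )^{t−1}. -/

import Mathlib

open scoped BigOperators

/-- The classical transition matrix `M` on directed bonds: `M_{bc} = 1/(d-1)` if the head of
`b` equals the tail of `c` and `c` is not the reversal of `b`, and `0` otherwise. -/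
noncomputable def transM {V : Type} [DecidableEq V] (G : SimpleGraph V) (d : ℕ) :
    Matrix G.Dart G.Dart ℂ := fun b c =>
  if b.snd = c.fst ∧ c ≠ b.symm then ((d : ℂ) - 1)⁻¹ else 0

/-- `e_v`: indicator vector of the directed bonds with tail `v`, as an element of the
Euclidean (ℓ²) space `ℂ^{2B}`. -/
noncomputable def eVec {V : Type} [Fintype V] [DecidableEq V] (G : SimpleGraph V)
    [DecidableRel G.Adj] (v : V) : EuclideanSpace ℂ G.Dart :=
  WithLp.toLp 2 (fun b => if b.fst = v then 1 else 0)

/-- The adjacency (connectivity) matrix of `G`, over `ℂ`. -/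
def adjC {V : Type} (G : SimpleGraph V) [DecidableRel G.Adj] : Matrix V V ℂ :=
  fun v w => if G.Adj v w then 1 else 0

/-- A matrix acting on Euclidean (ℓ²) space by matrix-vector multiplication. -/
noncomputable def act {ι : Type} [Fintype ι] (A : Matrix ι ι ℂ) (x : EuclideanSpace ℂ ι) :
    EuclideanSpace ℂ ι :=
  (WithLp.equiv 2 (ι → ℂ)).symm (A.mulVec (WithLp.equiv 2 (ι → ℂ) x))


noncomputable def qrec (D μ : ℝ) : ℕ → ℝ
  | 0 => 0
  | 1 => 1
  | (t+2) => (μ * qrec D μ (t+1) - qrec D μ t) / (D - 1)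

lemma qrec_complex (D μ : ℝ) (l1 l2 : ℂ) (hD : (1:ℝ) < D)
    (hsum : l1 + l2 = ((μ / (D-1) : ℝ) : ℂ)) (hprod : l1 * l2 = (((D-1)⁻¹ : ℝ) : ℂ)) :
    ∀ t : ℕ, ((qrec D μ t : ℂ)) = ∑ i ∈ Finset.range t, l1 ^ i * l2 ^ (t - 1 - i) := by
  have hD0 : (D - 1 : ℝ) ≠ 0 := by linarith
  have split : ∀ t : ℕ, (∑ i ∈ Finset.range (t+1), l1 ^ i * l2 ^ (t - i))
      = l2 ^ t + l1 * ∑ i ∈ Finset.range t, l1 ^ i * l2 ^ (t - 1 - i) := by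
    intro t
    rw [Finset.sum_range_succ' (fun i => l1 ^ i * l2 ^ (t - i))]
    rw [Finset.mul_sum]
    simp only [pow_zero, one_mul, Nat.sub_zero]
    rw [add_comm]
    congr 1
    apply Finset.sum_congr rfl
    intro i hi
    have hi' : i < t := Finset.mem_range.mp hi
    have : t - (i+1) = t - 1 - i := by omega
    rw [this, pow_succ']
    ring
  have key : ∀ t : ℕ, ((qrec D μ t : ℂ)) = ∑ i ∈ Finset.range t, l1 ^ i * l2 ^ (t - 1 - i)
      ∧ ((qrec D μ (t+1) : ℂ)) = ∑ i ∈ Finset.range (t+1), l1 ^ i * l2 ^ (t - i) := by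
    intro t
    induction t with
    | zero => simp [qrec]
    | succ t ih =>
      obtain ⟨ih1, ih2⟩ := ih
      constructor
      · simpa using ih2
      · show ((qrec D μ (t+2) : ℂ)) = _
        have hq : (qrec D μ (t+2) : ℂ) = ((μ / (D-1) : ℝ) : ℂ) * (qrec D μ (t+1) : ℂ)
            - (((D-1)⁻¹ : ℝ) : ℂ) * (qrec D μ t : ℂ) := by
          show (((μ * qrec D μ (t+1) - qrec D μ t) / (D - 1) : ℝ) : ℂ) = _
          push_cast
          field_simp
        rw [hq, ih1, ih2, ← hsum, ← hprod]
        have h3 := split (t+1)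
        simp only [Nat.add_sub_cancel] at h3
        rw [h3, split t]
        ring
  intro t; exact (key t).1

lemma qrec_abs_le (D μ : ℝ) (l1 l2 : ℂ) (ρ : ℝ) (hρ : 0 ≤ ρ) (hD : (1:ℝ) < D)
    (hsum : l1 + l2 = ((μ / (D-1) : ℝ) : ℂ)) (hprod : l1 * l2 = (((D-1)⁻¹ : ℝ) : ℂ))
    (h1 : ‖l1‖ ≤ ρ) (h2 : ‖l2‖ ≤ ρ) (t : ℕ) :
    |qrec D μ t| ≤ t * ρ ^ (t - 1) := by
  have := qrec_complex D μ l1 l2 hD hsum hprod t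
  have habs : |qrec D μ t| = ‖((qrec D μ t : ℂ))‖ := by
    rw [Complex.norm_real, Real.norm_eq_abs]
  rw [habs, this]
  calc ‖(∑ i ∈ Finset.range t, l1 ^ i * l2 ^ (t - 1 - i))‖
      ≤ ∑ i ∈ Finset.range t, ‖(l1 ^ i * l2 ^ (t - 1 - i))‖ := by
        exact norm_sum_le _ _
    _ ≤ ∑ i ∈ Finset.range t, ρ ^ (t-1) := by
        apply Finset.sum_le_sum
        intro i hi
        have hi' : i < t := Finset.mem_range.mp hi
        rw [norm_mul, norm_pow, norm_pow]
        calc ‖l1‖ ^ i * ‖l2‖ ^ (t-1-i) ≤ ρ ^ i * ρ ^ (t-1-i) := by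
              apply mul_le_mul (pow_le_pow_left₀ (norm_nonneg _) h1 i)
                (pow_le_pow_left₀ (norm_nonneg _) h2 _) (by positivity) (by positivity)
          _ = ρ ^ (t-1) := by rw [← pow_add]; congr 1; omega
    _ = t * ρ ^ (t-1) := by rw [Finset.sum_const, Finset.card_range, nsmul_eq_mul]

set_option maxHeartbeats 1000000 in
lemma roots_exist (D β μ : ℝ) (hD : 3 ≤ D) (hβ : 0 < β)
    (hβ' : β ≤ D - 1 - Real.sqrt (D-1)) (hμ : |μ| ≤ D - β) :
    ∃ l1 l2 : ℂ, l1 + l2 = ((μ/(D-1):ℝ):ℂ) ∧ l1*l2 = (((D-1)⁻¹:ℝ):ℂ)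
      ∧ ‖l1‖ ≤ (D-1-β)/(D-1) ∧ ‖l2‖ ≤ (D-1-β)/(D-1) := by
  have hD1 : (0:ℝ) < D - 1 := by linarith
  obtain ⟨ρ, hρdef⟩ : ∃ x : ℝ, x = (D-1-β)/(D-1) := ⟨_, rfl⟩
  obtain ⟨π, hπdef⟩ : ∃ x : ℝ, x = (D-1)⁻¹ := ⟨_, rfl⟩
  have hπ0 : 0 < π := by rw [hπdef]; exact inv_pos.mpr hD1
  have hsq2 : Real.sqrt (D-1) ^ 2 = D - 1 := Real.sq_sqrt (le_of_lt hD1)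
  have hsq0 : 0 < Real.sqrt (D-1) := Real.sqrt_pos.mpr hD1
  have hρ0 : 0 < ρ := by rw [hρdef]; exact div_pos (by nlinarith) hD1
  have hρ1 : ρ < 1 := by rw [hρdef, div_lt_one hD1]; linarith
  have hsqβ : Real.sqrt (D-1) ≤ D-1-β := by linarith
  have hπρ : π ≤ ρ ^ 2 := by
    rw [hπdef, hρdef, div_pow]
    rw [inv_eq_one_div, div_le_div_iff₀ hD1 (by positivity)]
    have h1 : D - 1 ≤ (D-1-β)^2 := by nlinarith
    nlinarith
  rw [← hρdef]
  obtain ⟨σ, hσdef⟩ : ∃ x : ℝ, x = μ / (D-1) := ⟨_, rfl⟩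
  rw [← hσdef, ← hπdef]
  have hm : |σ| ≤ ρ + π := by
    rw [hσdef, abs_div, abs_of_pos hD1, hρdef, hπdef, inv_eq_one_div,
      ← add_div, div_le_div_iff₀ hD1 hD1]
    nlinarith [abs_nonneg μ]
  obtain ⟨Δ, hΔdef⟩ : ∃ x : ℝ, x = σ^2 - 4*π := ⟨_, rfl⟩
  rcases lt_or_ge Δ 0 with hΔ | hΔ
  · -- complex roots
    obtain ⟨s, hsdef⟩ : ∃ x : ℝ, x = Real.sqrt (-Δ) / 2 := ⟨_, rfl⟩
    refine ⟨(σ/2 : ℝ) + s * Complex.I, (σ/2 : ℝ) - s * Complex.I, ?_, ?_, ?_, ?_⟩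
    · push_cast; ring
    · have hs2 : s^2 = -Δ/4 := by
        rw [hsdef, div_pow, Real.sq_sqrt (by linarith)]; norm_num
      have : ((σ/2 : ℝ) + s * Complex.I) * ((σ/2 : ℝ) - s * Complex.I)
          = ((σ/2)^2 + s^2 : ℝ) := by
        push_cast
        have : Complex.I^2 = -1 := Complex.I_sq
        ring_nf
        rw [this]; ring
      rw [this]
      congr 1
      rw [hs2, hΔdef]; ring
    · have habs : ‖((σ/2 : ℝ) + s * Complex.I)‖ ^ 2 = (σ/2)^2 + s^2 := by
        rw [Complex.sq_norm, Complex.normSq_apply]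
        simp [Complex.add_re, Complex.add_im]
        ring
      have hs2 : s^2 = -Δ/4 := by
        rw [hsdef, div_pow, Real.sq_sqrt (by linarith)]; norm_num
      have hle : ‖((σ/2 : ℝ) + s * Complex.I)‖ ^ 2 ≤ ρ ^ 2 := by
        rw [habs, hs2, hΔdef]
        have : (σ/2)^2 + -(σ^2 - 4*π)/4 = π := by ring
        rw [this]; exact hπρ
      nlinarith [norm_nonneg ((σ/2 : ℝ) + s * Complex.I)]
    · have habs : ‖((σ/2 : ℝ) - s * Complex.I)‖ ^ 2 = (σ/2)^2 + s^2 := by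
        rw [Complex.sq_norm, Complex.normSq_apply]
        simp [Complex.sub_re, Complex.sub_im]
        ring
      have hs2 : s^2 = -Δ/4 := by
        rw [hsdef, div_pow, Real.sq_sqrt (by linarith)]; norm_num
      have hle : ‖((σ/2 : ℝ) - s * Complex.I)‖ ^ 2 ≤ ρ ^ 2 := by
        rw [habs, hs2, hΔdef]
        have : (σ/2)^2 + -(σ^2 - 4*π)/4 = π := by ring
        rw [this]; exact hπρ
      nlinarith [norm_nonneg ((σ/2 : ℝ) - s * Complex.I)]
  · -- real roots
    obtain ⟨r, hrdef⟩ : ∃ x : ℝ, x = Real.sqrt Δ := ⟨_, rfl⟩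
    have hr0 : 0 ≤ r := by rw [hrdef]; exact Real.sqrt_nonneg _
    have hr2 : r^2 = Δ := by rw [hrdef]; exact Real.sq_sqrt hΔ
    have hρρ : ρ^2 ≤ ρ := by nlinarith
    have hmρ : |σ| ≤ 2*ρ := by linarith
    have hrle : r ≤ 2*ρ - |σ| := by
      have h1 : Δ ≤ (2*ρ - |σ|)^2 := by
        have hρm : ρ * |σ| ≤ ρ^2 + π := by nlinarith [abs_nonneg σ]
        rw [hΔdef]
        nlinarith [sq_abs σ]
      have h2 : 0 ≤ 2*ρ - |σ| := by linarith
      rw [hrdef]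
      calc Real.sqrt Δ ≤ Real.sqrt ((2*ρ - |σ|)^2) := Real.sqrt_le_sqrt h1
        _ = 2*ρ - |σ| := Real.sqrt_sq h2
    refine ⟨((σ+r)/2 : ℝ), ((σ-r)/2 : ℝ), ?_, ?_, ?_, ?_⟩
    · push_cast; ring
    · rw [← Complex.ofReal_mul]
      congr 1
      have : (σ+r)/2 * ((σ-r)/2) = (σ^2 - r^2)/4 := by ring
      rw [this, hr2, hΔdef]; ring
    · rw [Complex.norm_real, Real.norm_eq_abs]
      have := abs_abs σ
      rw [abs_div]
      simp only [abs_two]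
      rw [div_le_iff₀ (by norm_num : (0:ℝ) < 2)]
      have : |σ + r| ≤ |σ| + r := by
        calc |σ + r| ≤ |σ| + |r| := abs_add_le _ _
          _ = |σ| + r := by rw [abs_of_nonneg hr0]
      linarith
    · rw [Complex.norm_real, Real.norm_eq_abs]
      rw [abs_div]
      simp only [abs_two]
      rw [div_le_iff₀ (by norm_num : (0:ℝ) < 2)]
      have : |σ - r| ≤ |σ| + r := by
        calc |σ - r| ≤ |σ| + |r| := abs_sub _ _
          _ = |σ| + r := by rw [abs_of_nonneg hr0]
      linarith

section Graph

variable {V : Type} [Fintype V] [DecidableEq V] (G : SimpleGraph V) [DecidableRel G.Adj]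

/-- The "tail" lift of a vertex function to darts. -/
noncomputable def SvecG (x : V → ℂ) : EuclideanSpace ℂ G.Dart := WithLp.toLp 2 (fun b => x b.fst)

/-- The "head" lift of a vertex function to darts. -/
noncomputable def TvecG (x : V → ℂ) : EuclideanSpace ℂ G.Dart := WithLp.toLp 2 (fun b => x b.snd)

lemma act_apply {ι : Type} [Fintype ι] (A : Matrix ι ι ℂ) (x : EuclideanSpace ℂ ι) (i : ι) :
    act A x i = A.mulVec x i := rfl

lemma SvecG_apply (x : V → ℂ) (b : G.Dart) : SvecG G x b = x b.fst := rfl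
lemma TvecG_apply (x : V → ℂ) (b : G.Dart) : TvecG G x b = x b.snd := rfl

lemma fiber_sum (v : V) (F : V → ℂ) :
    ∑ b ∈ Finset.univ.filter (fun b : G.Dart => b.fst = v), F b.snd
      = ∑ w ∈ G.neighborFinset v, F w := by
  rw [SimpleGraph.dart_fst_fiber,
    Finset.sum_image (fun x _ y _ h => G.dartOfNeighborSet_injective v h)]
  rw [Finset.sum_subtype (G.neighborFinset v)
    (fun w => G.mem_neighborFinset v w) F]
  rfl

lemma fiber_card (d : ℕ) (hreg : G.IsRegularOfDegree d) (v : V) :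
    (Finset.univ.filter (fun b : G.Dart => b.fst = v)).card = d := by
  rw [G.dart_fst_fiber_card_eq_degree]; exact hreg v

lemma adjC_mulVec (x : V → ℂ) (v : V) :
    (adjC G).mulVec x v = ∑ w ∈ G.neighborFinset v, x w := by
  unfold adjC Matrix.mulVec dotProduct
  simp only [ite_mul, one_mul, zero_mul]
  rw [← Finset.sum_filter]
  congr 1
  ext w
  simp [SimpleGraph.mem_neighborFinset]

lemma adjC_row_sum (d : ℕ) (hreg : G.IsRegularOfDegree d) (v : V) :
    ∑ w : V, adjC G v w = (d : ℂ) := by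
  unfold adjC
  rw [Finset.sum_boole]
  have : (Finset.univ.filter (fun w => G.Adj v w)) = G.neighborFinset v := by
    ext w; simp [SimpleGraph.mem_neighborFinset]
  rw [this, SimpleGraph.card_neighborFinset_eq_degree, hreg v]

lemma adjC_symm (v w : V) : adjC G v w = adjC G w v := by
  exact if_congr (G.adj_comm v w) rfl rfl

lemma dart_filter_erase (b : G.Dart) :
    Finset.univ.filter (fun c : G.Dart => b.snd = c.fst ∧ c ≠ b.symm)
      = (Finset.univ.filter (fun c : G.Dart => c.fst = b.snd)).erase b.symm := by
  ext c
  simp only [Finset.mem_filter, Finset.mem_univ, true_and, Finset.mem_erase]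
  constructor
  · rintro ⟨h1, h2⟩; exact ⟨h2, h1.symm⟩
  · rintro ⟨h2, h1⟩; exact ⟨h1.symm, h2⟩

lemma dart_symm_mem (b : G.Dart) :
    b.symm ∈ Finset.univ.filter (fun c : G.Dart => c.fst = b.snd) := by
  simp [SimpleGraph.Dart.symm]

lemma transM_mulVec (d : ℕ) (y : G.Dart → ℂ) (b : G.Dart) :
    (transM G d).mulVec y b
      = ((d : ℂ) - 1)⁻¹ *
        ∑ c ∈ (Finset.univ.filter (fun c : G.Dart => c.fst = b.snd)).erase b.symm, y c := by
  unfold transM Matrix.mulVec dotProduct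
  simp only [ite_mul, one_mul, zero_mul]
  rw [← Finset.sum_filter, dart_filter_erase, Finset.mul_sum]

lemma hd_ne (d : ℕ) (hd : 3 ≤ d) : ((d : ℂ) - 1) ≠ 0 := by
  intro h
  have : (d : ℂ) = 1 := by linear_combination h
  have : (d : ℝ) = 1 := by exact_mod_cast congrArg Complex.re this
  have : (3 : ℝ) ≤ (d : ℝ) := by exact_mod_cast hd
  linarith

lemma act_transM_SvecG (d : ℕ) (hd : 3 ≤ d) (hreg : G.IsRegularOfDegree d) (x : V → ℂ) :
    act (transM G d) (SvecG G x) = TvecG G x := by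
  ext b
  rw [act_apply, transM_mulVec, TvecG_apply]
  have hcongr : ∀ c ∈ (Finset.univ.filter (fun c : G.Dart => c.fst = b.snd)).erase b.symm,
      SvecG G x c = x b.snd := by
    intro c hc
    have := (Finset.mem_filter.mp (Finset.mem_of_mem_erase hc)).2
    rw [SvecG_apply, this]
  have hsum : ∑ c ∈ (Finset.univ.filter (fun c : G.Dart => c.fst = b.snd)).erase b.symm,
      SvecG G x c = ((d : ℂ) - 1) * x b.snd := by
    rw [Finset.sum_congr rfl hcongr, Finset.sum_const,
      Finset.card_erase_of_mem (dart_symm_mem G b), fiber_card G d hreg, nsmul_eq_mul]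
    have h1 : 1 ≤ d := by omega
    have : ((d - 1 : ℕ) : ℂ) = (d : ℂ) - 1 := by push_cast [h1]; ring
    rw [this]
  rw [hsum, inv_mul_cancel_left₀ (hd_ne d hd)]

lemma act_transM_TvecG (d : ℕ) (hd : 3 ≤ d) (hreg : G.IsRegularOfDegree d) (x : V → ℂ) :
    act (transM G d) (TvecG G x)
      = ((d : ℂ) - 1)⁻¹ • (TvecG G ((adjC G).mulVec x) - SvecG G x) := by
  ext b
  rw [act_apply, transM_mulVec]
  have hsub : (((d : ℂ) - 1)⁻¹ • (TvecG G ((adjC G).mulVec x) - SvecG G x)) b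
      = ((d : ℂ) - 1)⁻¹ * ((adjC G).mulVec x b.snd - x b.fst) := rfl
  rw [hsub]
  congr 1
  rw [Finset.sum_erase_eq_sub (dart_symm_mem G b)]
  have h1 : ∑ c ∈ Finset.univ.filter (fun c : G.Dart => c.fst = b.snd), TvecG G x c
      = (adjC G).mulVec x b.snd := by
    rw [adjC_mulVec, ← fiber_sum]
    rfl
  have h2 : TvecG G x b.symm = x b.fst := rfl
  rw [h1, h2]

lemma norm_SvecG (d : ℕ) (hreg : G.IsRegularOfDegree d) (x : EuclideanSpace ℂ V) :
    ‖SvecG G x‖ = Real.sqrt d * ‖x‖ := by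
  rw [EuclideanSpace.norm_eq, EuclideanSpace.norm_eq, ← Real.sqrt_mul (by positivity)]
  congr 1
  rw [← Finset.sum_fiberwise_of_maps_to (fun (b : G.Dart) _ => Finset.mem_univ b.fst)
    (fun b => ‖SvecG G x b‖ ^ 2)]
  rw [Finset.mul_sum]
  refine Finset.sum_congr rfl (fun v _ => ?_)
  rw [Finset.sum_congr rfl (fun b hb => ?_)]
  · rw [Finset.sum_const, fiber_card G d hreg, nsmul_eq_mul]
  · have := (Finset.mem_filter.mp hb).2
    show ‖SvecG G x b‖ ^ 2 = ‖x v‖ ^ 2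
    rw [SvecG_apply, this]

lemma dart_snd_fiber_card (d : ℕ) (hreg : G.IsRegularOfDegree d) (v : V) :
    (Finset.univ.filter (fun b : G.Dart => b.snd = v)).card = d := by
  have : Finset.univ.filter (fun b : G.Dart => b.snd = v)
      = (Finset.univ.filter (fun b : G.Dart => b.fst = v)).image SimpleGraph.Dart.symm := by
    ext b
    simp only [Finset.mem_filter, Finset.mem_univ, true_and, Finset.mem_image]
    constructor
    · intro h; exact ⟨b.symm, h, b.symm_symm⟩
    · rintro ⟨c, hc, rfl⟩; exact hc
  rw [this, Finset.card_image_of_injective _ (SimpleGraph.Dart.symm_involutive.injective),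
    fiber_card G d hreg]

lemma norm_TvecG (d : ℕ) (hreg : G.IsRegularOfDegree d) (x : EuclideanSpace ℂ V) :
    ‖TvecG G x‖ = Real.sqrt d * ‖x‖ := by
  rw [EuclideanSpace.norm_eq, EuclideanSpace.norm_eq, ← Real.sqrt_mul (by positivity)]
  congr 1
  rw [← Finset.sum_fiberwise_of_maps_to (fun (b : G.Dart) _ => Finset.mem_univ b.snd)
    (fun b => ‖TvecG G x b‖ ^ 2)]
  rw [Finset.mul_sum]
  refine Finset.sum_congr rfl (fun v _ => ?_)
  rw [Finset.sum_congr rfl (fun b hb => ?_)]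
  · rw [Finset.sum_const, dart_snd_fiber_card G d hreg, nsmul_eq_mul]
  · have := (Finset.mem_filter.mp hb).2
    show ‖TvecG G x b‖ ^ 2 = ‖x v‖ ^ 2
    rw [TvecG_apply, this]

end Graph

section Spectral

variable {V : Type} [Fintype V] [DecidableEq V] (G : SimpleGraph V) [DecidableRel G.Adj]

lemma adjC_isHermitian : (adjC G).IsHermitian := by
  unfold Matrix.IsHermitian
  ext i j
  rw [Matrix.conjTranspose_apply]
  unfold adjC
  rw [apply_ite star, star_one, star_zero]
  exact if_congr (G.adj_comm j i) rfl rfl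

lemma norm_sq_coeffs {ι : Type} [Fintype ι] {E : Type} [NormedAddCommGroup E]
    [InnerProductSpace ℂ E] (v : ι → E) (hv : Orthonormal ℂ v) (l : ι → ℂ) :
    ‖∑ i, l i • v i‖ ^ 2 = ∑ i, ‖l i‖ ^ 2 := by
  have h := hv.inner_sum l l Finset.univ
  rw [norm_sq_eq_re_inner (𝕜 := ℂ), h, map_sum]
  refine Finset.sum_congr rfl (fun i _ => ?_)
  rw [mul_comm, Complex.mul_conj]
  simp only [Complex.normSq_eq_norm_sq]
  show Complex.re ((‖l i‖ ^ 2 : ℝ) : ℂ) = ‖l i‖ ^ 2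
  rw [Complex.ofReal_re]

lemma act_mul {ι : Type} [Fintype ι] (A B : Matrix ι ι ℂ) (x : EuclideanSpace ℂ ι) :
    act (A * B) x = act A (act B x) := by
  ext i
  rw [act_apply, act_apply, ← Matrix.mulVec_mulVec]
  rfl

lemma act_sub {ι : Type} [Fintype ι] (A : Matrix ι ι ℂ) (x y : EuclideanSpace ℂ ι) :
    act A (x - y) = act A x - act A y := by
  ext i
  rw [act_apply]
  have : A.mulVec (x - y) = A.mulVec x - A.mulVec y := Matrix.mulVec_sub A x y
  rw [WithLp.ofLp_sub, this]
  rfl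

lemma act_smul {ι : Type} [Fintype ι] (A : Matrix ι ι ℂ) (k : ℂ) (x : EuclideanSpace ℂ ι) :
    act A (k • x) = k • act A x := by
  ext i
  rw [act_apply]
  have : A.mulVec (k • x) = k • A.mulVec x := A.mulVec_smul k x
  rw [WithLp.ofLp_smul, this]
  rfl

lemma act_add {ι : Type} [Fintype ι] (A : Matrix ι ι ℂ) (x y : EuclideanSpace ℂ ι) :
    act A (x + y) = act A x + act A y := by
  ext i
  rw [act_apply]
  have : A.mulVec (x + y) = A.mulVec x + A.mulVec y := Matrix.mulVec_add A x y
  rw [WithLp.ofLp_add, this]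
  rfl

lemma act_sum {ι κ : Type} [Fintype ι] (A : Matrix ι ι ℂ) (f : κ → EuclideanSpace ℂ ι)
    (s : Finset κ) : act A (∑ j ∈ s, f j) = ∑ j ∈ s, act A (f j) := by
  classical
  induction s using Finset.cons_induction with
  | empty =>
    ext i
    rw [Finset.sum_empty, act_apply]
    have : A.mulVec (0 : EuclideanSpace ℂ ι) = 0 := Matrix.mulVec_zero A
    rw [this, Finset.sum_empty]
    rfl
  | cons j s hj ih =>
    rw [Finset.sum_cons, act_add, ih, Finset.sum_cons]

lemma SvecG_zero : SvecG G (0 : EuclideanSpace ℂ V) = 0 := by ext b; rfl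

lemma SvecG_smul (k : ℂ) (x : EuclideanSpace ℂ V) :
    SvecG G (k • x) = k • SvecG G x := by ext b; rfl

lemma SvecG_sub (x y : EuclideanSpace ℂ V) :
    SvecG G (x - y) = SvecG G x - SvecG G y := by ext b; rfl

lemma TvecG_smul (k : ℂ) (x : EuclideanSpace ℂ V) :
    TvecG G (k • x) = k • TvecG G x := by ext b; rfl

lemma TvecG_sub (x y : EuclideanSpace ℂ V) :
    TvecG G (x - y) = TvecG G x - TvecG G y := by ext b; rfl

end Spectral

set_option maxHeartbeats 2000000 in
/-- Proposition 4 (`prop:vier`): if every eigenvalue `μ` of `C` with an eigenvector orthogonal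
to the all-ones vector satisfies `|μ| ≤ d − β`, and `f = ∑_v a_v e_v` with `∑_v a_v = 0`, then
`‖M^t f‖ ≤ 2 ‖f‖ t ((d−1−β)/(d−1))^{t−1}` for all `t ≥ 1`. -/
theorem evenly_distributed_decay {V : Type} [Fintype V] [DecidableEq V]
    (G : SimpleGraph V) [DecidableRel G.Adj]
    (d : ℕ) (hd : 3 ≤ d) (hreg : G.IsRegularOfDegree d)
    (β : ℝ) (hβ : 0 < β) (hβ' : β ≤ (d : ℝ) - 1 - Real.sqrt ((d : ℝ) - 1))
    (hspec : ∀ (μ : ℂ) (x : V → ℂ), x ≠ 0 → (adjC G).mulVec x = μ • x →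
      (∑ v : V, x v) = 0 → ‖μ‖ ≤ (d : ℝ) - β)
    (a : V → ℂ) (ha : (∑ v : V, a v) = 0) :
    ∀ t : ℕ, 1 ≤ t →
      ‖act ((transM G d) ^ t) (∑ v : V, a v • eVec G v)‖ ≤
        2 * ‖∑ v : V, a v • eVec G v‖ * (t : ℝ) *
          (((d : ℝ) - 1 - β) / ((d : ℝ) - 1)) ^ (t - 1) := by
  -- basic real constants
  have hD3 : (3:ℝ) ≤ (d:ℝ) := by exact_mod_cast hd
  have hD1 : (0:ℝ) < (d:ℝ) - 1 := by linarith
  obtain ⟨ρ, hρdef⟩ : ∃ x : ℝ, x = ((d:ℝ) - 1 - β)/((d:ℝ)-1) := ⟨_, rfl⟩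
  have hsq2 : Real.sqrt ((d:ℝ)-1) ^ 2 = (d:ℝ) - 1 := Real.sq_sqrt (le_of_lt hD1)
  have hsq0 : 0 < Real.sqrt ((d:ℝ)-1) := Real.sqrt_pos.mpr hD1
  have hsqβ : Real.sqrt ((d:ℝ)-1) ≤ (d:ℝ)-1-β := by linarith
  have hρ0 : 0 < ρ := by rw [hρdef]; exact div_pos (by nlinarith) hD1
  have hρ1 : ρ < 1 := by rw [hρdef, div_lt_one hD1]; linarith
  have hπρ : ((d:ℝ)-1)⁻¹ ≤ ρ ^ 2 := by
    rw [hρdef, div_pow, inv_eq_one_div, div_le_div_iff₀ hD1 (by positivity)]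
    have h1 : (d:ℝ) - 1 ≤ ((d:ℝ)-1-β)^2 := by nlinarith
    nlinarith
  -- spectral decomposition
  have hherm : (adjC G).IsHermitian := adjC_isHermitian G
  set bas : OrthonormalBasis V ℂ (EuclideanSpace ℂ V) := hherm.eigenvectorBasis with hbas
  set μ : V → ℝ := hherm.eigenvalues with hμ
  set a' : EuclideanSpace ℂ V := WithLp.toLp 2 (fun v => a v : V → ℂ) with ha'
  set c : V → ℂ := fun i => bas.repr a' i with hc
  have hsum_repr : ∑ i, c i • bas i = a' := bas.sum_repr a'
  -- the eigenvalue bound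
  have hμbound : ∀ i : V, c i ≠ 0 → |μ i| ≤ (d:ℝ) - β := by
    intro i hi
    have hne : Nonempty V := ⟨i⟩
    have hn0 : ((Fintype.card V : ℂ)) ≠ 0 := by
      exact_mod_cast Nat.cast_ne_zero.mpr (Fintype.card_ne_zero)
    set u : V → ℂ := fun v => bas i v with hu
    set ssum : ℂ := ∑ v, u v with hssum
    set k : ℂ := ssum / (Fintype.card V : ℂ) with hk
    have hmu0 : (adjC G).mulVec u = (μ i) • u := hherm.mulVec_eigenvectorBasis i
    have hmu : (adjC G).mulVec u = ((μ i : ℂ)) • u := by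
      funext v
      rw [congrFun hmu0 v]
      show (μ i) • (u v) = (μ i : ℂ) * (u v)
      exact Complex.real_smul
    set x : V → ℂ := fun v => u v - k with hx
    have hsumx : ∑ v, x v = 0 := by
      rw [hx]
      rw [Finset.sum_sub_distrib, Finset.sum_const, ← hssum, nsmul_eq_mul, hk]
      rw [Finset.card_univ, mul_div_cancel₀ _ hn0, sub_self]
    have hcol : ∑ v, (adjC G).mulVec u v = (d:ℂ) * ssum := by
      unfold Matrix.mulVec dotProduct
      rw [Finset.sum_comm]
      rw [hssum, Finset.mul_sum]
      refine Finset.sum_congr rfl (fun w _ => ?_)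
      rw [← Finset.sum_mul]
      congr 1
      rw [Finset.sum_congr rfl (fun v _ => adjC_symm G v w)]
      exact adjC_row_sum G d hreg w
    have hds : (d:ℂ) * ssum = (μ i : ℂ) * ssum := by
      rw [← hcol]
      rw [hmu]
      rw [hssum, Finset.mul_sum]
      refine Finset.sum_congr rfl (fun v _ => rfl)
    have hdk : (d:ℂ) * k = (μ i : ℂ) * k := by
      rw [hk, ← mul_div_assoc, ← mul_div_assoc, hds]
    have hconst : (adjC G).mulVec (fun _ => k) = fun v => (d:ℂ) * k := by
      funext v
      unfold Matrix.mulVec dotProduct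
      rw [← Finset.sum_mul, adjC_row_sum G d hreg v]
    have hx_eig : (adjC G).mulVec x = (μ i : ℂ) • x := by
      have hxuk : x = u - (fun _ => k) := by funext v; rw [hx]; rfl
      rw [hxuk, Matrix.mulVec_sub, hmu, hconst]
      funext v
      show (μ i : ℂ) * u v - (d:ℂ) * k = (μ i : ℂ) * (u v - k)
      rw [hdk]; ring
    by_cases hxz : x = 0
    · exfalso
      apply hi
      show bas.repr a' i = 0
      rw [bas.repr_apply_apply a' i]
      have hinner : (inner ℂ (bas i) a' : ℂ) = ∑ v, (starRingEnd ℂ) (u v) * a v := by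
        rw [PiLp.inner_apply]
        simp only [RCLike.inner_apply']
        rfl
      rw [hinner]
      have huv : ∀ v, u v = k := by
        intro v
        have := congrFun hxz v
        rw [hx] at this
        have : u v - k = 0 := this
        linear_combination this
      rw [Finset.sum_congr rfl (fun v _ => by rw [huv v])]
      rw [← Finset.mul_sum, ha, mul_zero]
    · have := hspec ((μ i : ℂ)) x hxz hx_eig hsumx
      rwa [Complex.norm_real, Real.norm_eq_abs] at this
  -- per-index scalar bound
  have hq : ∀ i : V, c i ≠ 0 → ∀ s : ℕ, |qrec (d:ℝ) (μ i) s| ≤ s * ρ^(s-1) := by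
    intro i hi s
    obtain ⟨l1, l2, hsm, hpr, h1, h2⟩ :=
      roots_exist (d:ℝ) β (μ i) hD3 hβ hβ' (hμbound i hi)
    rw [hρdef]
    exact qrec_abs_le (d:ℝ) (μ i) l1 l2 _ (by rw [← hρdef]; exact le_of_lt hρ0)
      (by linarith) hsm hpr h1 h2 s
  -- the sequence of vertex vectors
  set w : ℕ → EuclideanSpace ℂ V :=
    fun s => ∑ i, (c i * ((qrec (d:ℝ) (μ i) s : ℝ) : ℂ)) • bas i with hw
  have hw_norm : ∀ s : ℕ, ‖w s‖ ≤ ((s : ℝ) * ρ^(s-1)) * ‖a'‖ := by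
    intro s
    have ha2 : ‖a'‖^2 = ∑ i, ‖c i‖^2 := by
      rw [← hsum_repr, norm_sq_coeffs _ bas.orthonormal]
    have h1 : ‖w s‖^2 ≤ (((s : ℝ) * ρ^(s-1)) * ‖a'‖)^2 := by
      rw [hw, norm_sq_coeffs _ bas.orthonormal, mul_pow, ha2, Finset.mul_sum]
      apply Finset.sum_le_sum
      intro i _
      by_cases hcz : c i = 0
      · simp [hcz]
      · have hb := hq i hcz s
        rw [norm_mul, Complex.norm_real, Real.norm_eq_abs, mul_pow]
        have h2 : |qrec (d:ℝ) (μ i) s| ^ 2 ≤ ((s:ℝ) * ρ^(s-1))^2 := by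
          have h0 : (0:ℝ) ≤ |qrec (d:ℝ) (μ i) s| := abs_nonneg _
          nlinarith
        nlinarith [norm_nonneg (c i), sq_nonneg (‖c i‖)]
    have hs0 : (0:ℝ) ≤ ((s:ℝ) * ρ^(s-1)) * ‖a'‖ := by positivity
    nlinarith [norm_nonneg (w s)]
  have hw0 : w 0 = 0 := by
    rw [hw]
    refine Finset.sum_eq_zero (fun i _ => ?_)
    show (c i * ((qrec (d:ℝ) (μ i) 0 : ℝ) : ℂ)) • bas i = 0
    rw [show qrec (d:ℝ) (μ i) 0 = 0 from rfl]
    simp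
  have hw1 : w 1 = a' := by
    rw [hw, ← hsum_repr]
    refine Finset.sum_congr rfl (fun i _ => ?_)
    rw [show qrec (d:ℝ) (μ i) 1 = 1 from rfl]
    norm_num
  have heig : ∀ i : V, act (adjC G) (bas i) = ((μ i : ℂ)) • bas i := by
    intro i
    have hmu0 : (adjC G).mulVec (fun v => bas i v) = (μ i) • (fun v => bas i v) :=
      hherm.mulVec_eigenvectorBasis i
    ext v
    rw [act_apply, congrFun hmu0 v, Pi.smul_apply, PiLp.smul_apply, Complex.real_smul,
      smul_eq_mul]
  have hwrec : ∀ s : ℕ, w (s+2) = ((d:ℂ)-1)⁻¹ • (act (adjC G) (w (s+1)) - w s) := by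
    intro s
    have hact : act (adjC G) (w (s+1))
        = ∑ i, ((c i * ((qrec (d:ℝ) (μ i) (s+1) : ℝ) : ℂ)) * (μ i : ℂ)) • bas i := by
      simp only [hw]
      rw [act_sum]
      refine Finset.sum_congr rfl (fun i _ => ?_)
      rw [act_smul, heig i, smul_smul]
    rw [hact]
    simp only [hw]
    rw [← Finset.sum_sub_distrib, Finset.smul_sum]
    refine Finset.sum_congr rfl (fun i _ => ?_)
    rw [← sub_smul, smul_smul]
    congr 1
    have hqs : qrec (d:ℝ) (μ i) (s+2)
        = ((μ i) * qrec (d:ℝ) (μ i) (s+1) - qrec (d:ℝ) (μ i) s) / ((d:ℝ) - 1) := rfl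
    rw [hqs]
    have hDne : ((d:ℂ) - 1) ≠ 0 := hd_ne d hd
    rw [div_eq_mul_inv]
    push_cast
    ring
  -- the main operator identity
  have hf : (∑ v : V, a v • eVec G v) = SvecG G a' := by
    ext b
    have hsum : (∑ v : V, a v • eVec G v) b = ∑ v : V, (a v • eVec G v) b :=
      (congrFun (WithLp.ofLp_sum (s := Finset.univ) (f := fun v : V => a v • eVec G v)) b).trans
        (Finset.sum_apply b Finset.univ _)
    rw [hsum]
    have : ∀ v : V, (a v • eVec G v) b = if b.fst = v then a v else 0 := by
      intro v
      show a v * (if b.fst = v then 1 else 0) = if b.fst = v then a v else 0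
      by_cases h : b.fst = v <;> simp [h]
    rw [Finset.sum_congr rfl (fun v _ => this v), Finset.sum_ite_eq Finset.univ b.fst a]
    simp [SvecG_apply]
    rfl
  have hM : ∀ s : ℕ, act ((transM G d)^(s+1)) (SvecG G a')
      = TvecG G (w (s+1)) - ((d:ℂ)-1)⁻¹ • SvecG G (w s) := by
    intro s
    induction s with
    | zero =>
      rw [pow_one, hw0, hw1, SvecG_zero, smul_zero, sub_zero]
      exact act_transM_SvecG G d hd hreg a'
    | succ s ih =>
      rw [pow_succ']
      rw [act_mul, ih, act_sub, act_smul]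
      rw [act_transM_SvecG G d hd hreg (w s), act_transM_TvecG G d hd hreg (w (s+1))]
      rw [hwrec s]
      have hact' : TvecG G ((((d:ℂ)-1)⁻¹ • (act (adjC G) (w (s+1)) - w s) : EuclideanSpace ℂ V))
          = ((d:ℂ)-1)⁻¹ • (TvecG G (act (adjC G) (w (s+1))) - TvecG G (w s)) := by
        rw [WithLp.ofLp_smul, TvecG_smul, WithLp.ofLp_sub, TvecG_sub]
      rw [hact']
      have hTmv : TvecG G (act (adjC G) (w (s+1))) = TvecG G ((adjC G).mulVec (w (s+1))) := rfl
      rw [hTmv]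
      rw [smul_sub, smul_sub]
      abel
  -- put it together
  intro t ht
  obtain ⟨s, rfl⟩ : ∃ s : ℕ, t = s + 1 := ⟨t - 1, by omega⟩
  rw [hf, hM s, ← hρdef]
  have hnorm1 : ‖TvecG G (w (s+1))‖ = Real.sqrt d * ‖w (s+1)‖ := norm_TvecG G d hreg _
  have hnorm2 : ‖((d:ℂ)-1)⁻¹ • SvecG G (w s)‖ = ((d:ℝ)-1)⁻¹ * (Real.sqrt d * ‖w s‖) := by
    rw [norm_smul, norm_SvecG G d hreg]
    congr 1
    have : ((d:ℂ)-1) = (((d:ℝ)-1 : ℝ) : ℂ) := by push_cast; ring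
    rw [this, norm_inv, Complex.norm_real, Real.norm_eq_abs, abs_of_pos hD1]
  have hfn : ‖SvecG G a'‖ = Real.sqrt d * ‖a'‖ := norm_SvecG G d hreg _
  have hd0 : (0:ℝ) ≤ Real.sqrt d := Real.sqrt_nonneg _
  have hkey : ((d:ℝ)-1)⁻¹ * ((s:ℝ) * ρ^(s-1)) ≤ ((s:ℝ)+1) * ρ^s := by
    rcases Nat.eq_zero_or_pos s with hs | hs
    · subst hs
      simp only [Nat.cast_zero, zero_mul, mul_zero]
      positivity
    · obtain ⟨r, rfl⟩ : ∃ r : ℕ, s = r + 1 := ⟨s - 1, by omega⟩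
      have h1 : ((d:ℝ)-1)⁻¹ * ρ^r ≤ ρ^(r+1) := by
        calc ((d:ℝ)-1)⁻¹ * ρ^r ≤ ρ^2 * ρ^r := by
              apply mul_le_mul_of_nonneg_right hπρ (by positivity)
          _ = ρ^(r+1) * ρ := by ring
          _ ≤ ρ^(r+1) * 1 := by
              apply mul_le_mul_of_nonneg_left (le_of_lt hρ1) (by positivity)
          _ = ρ^(r+1) := by ring
      have h2 : ((r:ℝ)+1) ≤ ((r:ℝ)+1) + 1 := by linarith
      calc ((d:ℝ)-1)⁻¹ * (((r+1:ℕ):ℝ) * ρ^((r+1)-1))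
          = ((r:ℝ)+1) * (((d:ℝ)-1)⁻¹ * ρ^r) := by push_cast; ring
        _ ≤ ((r:ℝ)+1) * ρ^(r+1) := by
            apply mul_le_mul_of_nonneg_left h1 (by positivity)
        _ ≤ (((r+1:ℕ):ℝ)+1) * ρ^(r+1) := by
            apply mul_le_mul_of_nonneg_right _ (by positivity)
            push_cast; linarith
  calc ‖TvecG G (w (s+1)) - ((d:ℂ)-1)⁻¹ • SvecG G (w s)‖
      ≤ ‖TvecG G (w (s+1))‖ + ‖((d:ℂ)-1)⁻¹ • SvecG G (w s)‖ := norm_sub_le _ _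
    _ = Real.sqrt d * ‖w (s+1)‖ + ((d:ℝ)-1)⁻¹ * (Real.sqrt d * ‖w s‖) := by
        rw [hnorm1, hnorm2]
    _ ≤ Real.sqrt d * ((((s+1:ℕ):ℝ)) * ρ^((s+1)-1) * ‖a'‖)
        + ((d:ℝ)-1)⁻¹ * (Real.sqrt d * (((s:ℝ)) * ρ^(s-1) * ‖a'‖)) := by
        have w1 := hw_norm (s+1)
        have w2 := hw_norm s
        have h1 : Real.sqrt d * ‖w (s+1)‖ ≤ Real.sqrt d * ((((s+1:ℕ):ℝ)) * ρ^((s+1)-1) * ‖a'‖) :=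
          mul_le_mul_of_nonneg_left w1 hd0
        have h2 : ((d:ℝ)-1)⁻¹ * (Real.sqrt d * ‖w s‖)
            ≤ ((d:ℝ)-1)⁻¹ * (Real.sqrt d * (((s:ℝ)) * ρ^(s-1) * ‖a'‖)) := by
          apply mul_le_mul_of_nonneg_left _ (by positivity)
          exact mul_le_mul_of_nonneg_left w2 hd0
        linarith
    _ ≤ 2 * (Real.sqrt d * ‖a'‖) * (((s+1:ℕ):ℝ)) * ρ^s := by
        have hh : ((d:ℝ)-1)⁻¹ * (((s:ℝ)) * ρ^(s-1)) ≤ ((s:ℝ)+1) * ρ^s := hkey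
        have hna : (0:ℝ) ≤ ‖a'‖ := norm_nonneg _
        have hs1 : (((s+1:ℕ):ℝ)) = (s:ℝ)+1 := by push_cast; ring
        rw [hs1]
        have e1 : (s+1) - 1 = s := by omega
        rw [e1]
        nlinarith [mul_le_mul_of_nonneg_left hh (mul_nonneg hd0 hna), hd0, hna,
          mul_nonneg (mul_nonneg hd0 hna) (mul_nonneg (by positivity : (0:ℝ) ≤ (s:ℝ)+1) (by positivity : (0:ℝ) ≤ ρ^s))]
    _ = 2 * ‖SvecG G a'‖ * (((s+1:ℕ):ℝ)) * ρ^((s+1)-1) := by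
        rw [hfn]
        have e1 : (s+1) - 1 = s := by omega
        rw [e1]
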